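/- arXiv:1507.00048 — 6 statements merged into one kernel-verified Lean document; each statement's English description precedes it below -/
import Mathlib

section
/- Let P and Q be finite-rank orthogonal projections of the same rank n on a Hilbert space H with ‖P - Q‖ = 1. Then there exists a unit vector e ∈ H such that either (Pe = e and Qe = 0) or (Qe = e and Pe = 0). -/
open RCLike

section Aux

variable {𝕜 H : Type*} [RCLike 𝕜] [NormedAddCommGroup H] [InnerProductSpace 𝕜 H]
  [CompleteSpace H]

local notation "⟪" x ", " y "⟫" => @inner 𝕜 _ _ x y

lemma aux_re_inner (P : H →L[𝕜] H) (hsa : IsSelfAdjoint P) (hid : P ∘L P = P) (x : H) :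
    re ⟪P x, x⟫ = ‖P x‖ ^ 2 := by
  have h0 : P (P x) = P x := congrFun (congrArg DFunLike.coe hid) x
  have h1 : ⟪P x, x⟫ = ⟪P x, P x⟫ := by
    conv_lhs => rw [← h0]
    exact hsa.isSymmetric (P x) x
  rw [h1, inner_self_eq_norm_sq]

lemma aux_norm_le (P : H →L[𝕜] H) (hsa : IsSelfAdjoint P) (hid : P ∘L P = P) (x : H) :
    ‖P x‖ ≤ ‖x‖ := by
  have h1 : re ⟪P x, x⟫ = ‖P x‖ ^ 2 := aux_re_inner P hsa hid x
  have h2 : re ⟪P x, x⟫ ≤ ‖P x‖ * ‖x‖ :=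
    (re_le_norm _).trans (norm_inner_le_norm _ _)
  nlinarith [norm_nonneg (P x), norm_nonneg x]

lemma aux_kill (P : H →L[𝕜] H) (hsa : IsSelfAdjoint P) (hid : P ∘L P = P)
    (V : Submodule 𝕜 H) (hV : ∀ x, P x ∈ V)
    {w : H} (hw : w ∈ Vᗮ) : P w = 0 := by
  have hmem : P w ∈ V := hV w
  have h0 : ⟪P w, w⟫ = 0 := (Submodule.mem_orthogonal V w).mp hw (P w) hmem
  have h1 : ‖P w‖ ^ 2 = 0 := by
    rw [← aux_re_inner P hsa hid w, h0, map_zero]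
  have := pow_eq_zero_iff (n := 2) (by norm_num) |>.mp h1
  simpa using this

/-- key final step: unit vector with `P e - Q e = e` -/
lemma aux_key (P Q : H →L[𝕜] H) (hPsa : IsSelfAdjoint P) (hPid : P ∘L P = P)
    (hQsa : IsSelfAdjoint Q) (hQid : Q ∘L Q = Q) (e : H) (he : ‖e‖ = 1)
    (hTe : P e - Q e = e) : P e = e ∧ Q e = 0 := by
  have h1 : re ⟪P e, e⟫ - re ⟪Q e, e⟫ = 1 := by
    have : ⟪P e - Q e, e⟫ = ⟪e, e⟫ := by rw [hTe]
    rw [inner_sub_left] at this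
    have := congrArg re this
    simp only [map_sub] at this
    rw [this, inner_self_eq_norm_sq, he]; norm_num
  have hP1 : re ⟪P e, e⟫ = ‖P e‖ ^ 2 := aux_re_inner P hPsa hPid e
  have hQ1 : re ⟪Q e, e⟫ = ‖Q e‖ ^ 2 := aux_re_inner Q hQsa hQid e
  have hPle : ‖P e‖ ≤ 1 := he ▸ aux_norm_le P hPsa hPid e
  rw [hP1, hQ1] at h1
  have hQ0 : ‖Q e‖ ^ 2 = 0 := by nlinarith [norm_nonneg (Q e), norm_nonneg (P e)]
  have hQe : Q e = 0 := by
    have := pow_eq_zero_iff (n := 2) (by norm_num) |>.mp hQ0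
    simpa using this
  refine ⟨?_, hQe⟩
  have hPn : ‖P e‖ ^ 2 = 1 := by nlinarith
  have : ‖P e - e‖ ^ 2 = 0 := by
    rw [@norm_sub_sq 𝕜, hP1, hPn, he]
    norm_num [hP1, hPn]
  have h2 := pow_eq_zero_iff (n := 2) (by norm_num) |>.mp this
  rw [norm_eq_zero, sub_eq_zero] at h2
  exact h2

end Aux

/-- `P` is an orthogonal projection of rank `n` on a Hilbert space. -/
def IsOrthProjOfRank {𝕜 H : Type*} [RCLike 𝕜] [NormedAddCommGroup H]
    [InnerProductSpace 𝕜 H] [CompleteSpace H] (n : ℕ) (P : H →L[𝕜] H) : Prop :=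
  IsSelfAdjoint P ∧ P ∘L P = P ∧ Module.finrank 𝕜 (LinearMap.range (P : H →ₗ[𝕜] H)) = n

theorem stmt3 {𝕜 H : Type*} [RCLike 𝕜] [NormedAddCommGroup H] [InnerProductSpace 𝕜 H]
    [CompleteSpace H] (n : ℕ) (hn : 0 < n) (P Q : H →L[𝕜] H)
    (hP : IsOrthProjOfRank n P) (hQ : IsOrthProjOfRank n Q) (hPQ : ‖P - Q‖ = 1) :
    ∃ e : H, ‖e‖ = 1 ∧ ((P e = e ∧ Q e = 0) ∨ (Q e = e ∧ P e = 0)) := by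
  obtain ⟨hPsa, hPid, hPrk⟩ := hP
  obtain ⟨hQsa, hQid, hQrk⟩ := hQ
  set T : H →L[𝕜] H := P - Q with hTdef
  haveI hfdP : FiniteDimensional 𝕜 (LinearMap.range (P : H →ₗ[𝕜] H)) :=
    FiniteDimensional.of_finrank_pos (by rw [hPrk]; exact hn)
  haveI hfdQ : FiniteDimensional 𝕜 (LinearMap.range (Q : H →ₗ[𝕜] H)) :=
    FiniteDimensional.of_finrank_pos (by rw [hQrk]; exact hn)
  set V : Submodule 𝕜 H :=
    LinearMap.range (P : H →ₗ[𝕜] H) ⊔ LinearMap.range (Q : H →ₗ[𝕜] H) with hVdef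
  haveI : FiniteDimensional 𝕜 V := Submodule.finiteDimensional_sup _ _
  -- T maps H into V and kills Vᗮ
  have hkill : ∀ w ∈ Vᗮ, T w = 0 := by
    intro w hw
    have h1 : P w = 0 := aux_kill P hPsa hPid V
      (fun x => Submodule.mem_sup_left (LinearMap.mem_range_self (P : H →ₗ[𝕜] H) x)) hw
    have h2 : Q w = 0 := aux_kill Q hQsa hQid V
      (fun x => Submodule.mem_sup_right (LinearMap.mem_range_self (Q : H →ₗ[𝕜] H) x)) hw
    simp [hTdef, ContinuousLinearMap.sub_apply, h1, h2]
  have hproj : ∀ x : H, T x = T ((V.orthogonalProjectionOnto x : H)) := by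
    intro x
    have hw : x - (V.orthogonalProjectionOnto x : H) ∈ Vᗮ :=
      V.sub_starProjection_mem_orthogonal x
    have := hkill _ hw
    rw [map_sub, sub_eq_zero] at this
    exact this
  -- the norm of T is attained on the compact unit ball of V
  haveI : ProperSpace V := FiniteDimensional.proper_rclike 𝕜 V
  obtain ⟨v0, hv0B, hmax⟩ := (isCompact_closedBall (0 : V) 1).exists_isMaxOn
    (s := Metric.closedBall (0 : V) 1) (f := fun v : V => ‖T (v : H)‖)
    ⟨0, Metric.mem_closedBall_self zero_le_one⟩
    ((T.continuous.comp continuous_subtype_val).norm.continuousOn)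
  have hv0 : ‖(v0 : H)‖ ≤ 1 := by
    simpa [Metric.mem_closedBall, dist_zero_right] using hv0B
  have hmax' : ∀ x : H, ‖x‖ ≤ 1 → ‖T x‖ ≤ ‖T (v0 : H)‖ := by
    intro x hx
    set v : V := V.orthogonalProjectionOnto x with hv
    have h1 : ‖(v : H)‖ ≤ ‖x‖ := by
      calc ‖(v : H)‖ ≤ ‖V.orthogonalProjectionOnto‖ * ‖x‖ :=
            (V.orthogonalProjectionOnto).le_opNorm x
        _ ≤ 1 * ‖x‖ :=
            mul_le_mul_of_nonneg_right (V.orthogonalProjectionOnto_norm_le) (norm_nonneg x)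
        _ = ‖x‖ := one_mul ‖x‖
    have hvB : v ∈ Metric.closedBall (0 : V) 1 := by
      rw [Metric.mem_closedBall, dist_zero_right]
      exact h1.trans hx
    have h2 := hmax hvB
    rw [hproj x]
    exact h2
  -- conclude ‖T v0‖ = 1 and ‖v0‖ = 1
  have hle1 : ‖T (v0 : H)‖ ≤ 1 := by
    calc ‖T (v0 : H)‖ ≤ ‖T‖ * ‖(v0 : H)‖ := T.le_opNorm _
      _ ≤ 1 * 1 := by rw [hPQ]; exact mul_le_mul_of_nonneg_left hv0 zero_le_one
      _ = 1 := one_mul 1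
  have hge1 : (1 : ℝ) ≤ ‖T (v0 : H)‖ := by
    rw [← hPQ]
    refine T.opNorm_le_bound (norm_nonneg _) ?_
    intro x
    rcases eq_or_ne x 0 with rfl | hx0
    · simp
    · have hxn : ‖x‖ ≠ 0 := norm_ne_zero_iff.mpr hx0
      have := hmax' (((‖x‖ : 𝕜))⁻¹ • x)
        (by rw [norm_smul, norm_inv, RCLike.norm_ofReal, abs_norm]; field_simp; exact le_rfl)
      rw [map_smul, norm_smul, norm_inv, RCLike.norm_ofReal, abs_norm] at this
      rw [mul_comm]
      calc ‖T x‖ = ‖x‖ * (‖x‖⁻¹ * ‖T x‖) := by field_simp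
        _ ≤ ‖x‖ * ‖T (v0 : H)‖ := mul_le_mul_of_nonneg_left this (norm_nonneg x)
  have hTv0 : ‖T (v0 : H)‖ = 1 := le_antisymm hle1 hge1
  have hv0n : ‖(v0 : H)‖ = 1 := by
    refine le_antisymm hv0 ?_
    by_contra h
    push_neg at h
    have : ‖T (v0 : H)‖ ≤ ‖T‖ * ‖(v0 : H)‖ := T.le_opNorm _
    rw [hTv0, hPQ, one_mul] at this
    linarith
  set e0 : H := (v0 : H) with he0
  -- T (T e0) = e0
  have hTsa : IsSelfAdjoint T := hPsa.sub hQsa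
  have hTT : T (T e0) = e0 := by
    have ha : re (inner 𝕜 (T (T e0)) e0 : 𝕜) = 1 := by
      have h3 : (inner 𝕜 (T (T e0)) e0 : 𝕜) = inner 𝕜 (T e0) (T e0) := hTsa.isSymmetric (T e0) e0
      rw [h3, inner_self_eq_norm_sq, hTv0]; norm_num
    have hb : ‖T (T e0)‖ ≤ 1 := by
      calc ‖T (T e0)‖ ≤ ‖T‖ * ‖T e0‖ := T.le_opNorm _
        _ = 1 := by rw [hPQ, hTv0, one_mul]
    have hc : ‖T (T e0) - e0‖ ^ 2 = 0 := by
      have := @norm_sub_sq 𝕜 _ _ _ _ (T (T e0)) e0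
      rw [this, ha, hv0n]
      nlinarith [norm_nonneg (T (T e0)), sq_nonneg (‖T (T e0) - e0‖)]
    have hd := pow_eq_zero_iff (n := 2) (by norm_num) |>.mp hc
    rw [norm_eq_zero, sub_eq_zero] at hd
    exact hd
  -- case split on f = T e0 + e0
  by_cases hf : T e0 + e0 = 0
  · -- T e0 = -e0, so Q e0 - P e0 = e0
    have hTe0 : T e0 = -e0 := eq_neg_of_add_eq_zero_left hf
    have hPQe : P e0 - Q e0 = -e0 := by
      rw [← hTe0]; simp [hTdef, ContinuousLinearMap.sub_apply]
    have hQe : Q e0 - P e0 = e0 := by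
      rw [← neg_sub (P e0) (Q e0), hPQe, neg_neg]
    obtain ⟨h1, h2⟩ := aux_key Q P hQsa hQid hPsa hPid e0 hv0n hQe
    exact ⟨e0, hv0n, Or.inr ⟨h1, h2⟩⟩
  · set f : H := T e0 + e0 with hfdef2
    have hTf : T f = f := by
      rw [hfdef2, map_add, hTT, add_comm]
    have hfn : ‖f‖ ≠ 0 := norm_ne_zero_iff.mpr hf
    set e : H := ((‖f‖ : 𝕜))⁻¹ • f with hedef
    have hen : ‖e‖ = 1 := by
      rw [hedef, norm_smul, norm_inv, RCLike.norm_ofReal, abs_norm]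
      field_simp
    have hTe : T e = e := by
      rw [hedef, map_smul, hTf]
    have hPe : P e - Q e = e := by
      have : T e = P e - Q e := by simp [hTdef, ContinuousLinearMap.sub_apply]
      rw [← this, hTe]
    obtain ⟨h1, h2⟩ := aux_key P Q hPsa hPid hQsa hQid e hen hPe
    exact ⟨e, hen, Or.inl ⟨h1, h2⟩⟩
end

section
/- Let H = H₁ ⊕ H₂ ⊕ H₃ be an orthogonal decomposition with dim H₁ = dim H₂ = r, and let P be the projection onto H₁ ⊕ im P₁ and Q the projection onto H₂ ⊕ im Q₁, where P₁, Q₁ are rank-(n−r) projections on H₃. For any unitary U : H₂ → H₁ and any rank-(n−r) projection R₁ on H₃, the operator R given in block form by [[½I, ½U, 0],[½U*, ½I, 0],[0, 0, R₁]] is an orthogonal projection of rank n, and if ‖R₁ − P₁‖ ≤ 1/√2 and ‖R₁ − Q₁‖ ≤ 1/√2 then ‖R − P‖ ≤ 1/√2 and ‖R − Q‖ ≤ 1/√2. -/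
/-- The operator norm (ℓ²→ℓ² norm) of a square matrix. -/
noncomputable def matOpNorm {ι : Type*} [Fintype ι] [DecidableEq ι] {𝕜 : Type*} [RCLike 𝕜]
    (M : Matrix ι ι 𝕜) : ℝ :=
  ‖Matrix.toEuclideanCLM (𝕜 := 𝕜) M‖

/-- `M` is an orthogonal-projection matrix of rank `n`. -/
def IsProjMatOfRank {ι : Type*} [Fintype ι] [DecidableEq ι] {𝕜 : Type*} [RCLike 𝕜]
    (n : ℕ) (M : Matrix ι ι 𝕜) : Prop :=
  M.IsHermitian ∧ M * M = M ∧ M.rank = n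

open Matrix
open scoped Matrix.Norms.L2Operator

section Aux

variable {𝕜 : Type*} [RCLike 𝕜]

lemma matOpNorm_eq {ι : Type*} [Fintype ι] [DecidableEq ι] (M : Matrix ι ι 𝕜) :
    matOpNorm M = ‖M‖ := rfl

lemma trace_of_idem {ι : Type*} [Fintype ι] [DecidableEq ι] (M : Matrix ι ι 𝕜)
    (h : M * M = M) : M.trace = (M.rank : 𝕜) := by
  have hproj : LinearMap.IsProj (LinearMap.range M.mulVecLin) M.mulVecLin := by
    refine ⟨fun x => LinearMap.mem_range_self _ x, ?_⟩
    rintro x ⟨y, rfl⟩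
    have := congrArg (fun N => Matrix.mulVecLin N y) h
    simpa [Matrix.mulVecLin_mul] using this
  have h1 : LinearMap.trace 𝕜 (ι → 𝕜) M.mulVecLin = M.trace := by
    rw [LinearMap.trace_eq_matrix_trace 𝕜 (Pi.basisFun 𝕜 ι), LinearMap.toMatrix_eq_toMatrix',
      ← Matrix.toLin'_apply', LinearMap.toMatrix'_toLin']
  rw [← h1, hproj.trace, Matrix.rank]

lemma trace_fromBlocks' {α β : Type*} [Fintype α] [Fintype β]
    (A : Matrix α α 𝕜) (B : Matrix α β 𝕜) (C : Matrix β α 𝕜) (D : Matrix β β 𝕜) :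
    (Matrix.fromBlocks A B C D).trace = A.trace + D.trace := by
  simp [Matrix.trace, Fintype.sum_sum_type, Matrix.fromBlocks, Matrix.diag]

lemma euclid_sq {γ : Type*} [Fintype γ] (y : EuclideanSpace 𝕜 γ) :
    ‖y‖ ^ 2 = ∑ a, ‖y a‖ ^ 2 := by
  rw [EuclideanSpace.norm_eq, Real.sq_sqrt (by positivity)]

lemma clm_apply_eq {γ : Type*} [Fintype γ] [DecidableEq γ] (Z : Matrix γ γ 𝕜)
    (y : EuclideanSpace 𝕜 γ) :
    toEuclideanCLM (𝕜 := 𝕜) Z y = (WithLp.equiv 2 _).symm (Z *ᵥ (WithLp.equiv 2 _ y)) := by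
  rw [← (WithLp.equiv 2 _).symm_apply_apply (toEuclideanCLM (𝕜 := 𝕜) Z y)]
  rfl

lemma key_bound {γ : Type*} [Fintype γ] [DecidableEq γ] (Z : Matrix γ γ 𝕜) {c : ℝ}
    (hZ : ‖Z‖ ≤ c) (u : γ → 𝕜) :
    ∑ a, ‖(Z *ᵥ u) a‖ ^ 2 ≤ c ^ 2 * ∑ a, ‖u a‖ ^ 2 := by
  set u' : EuclideanSpace 𝕜 γ := (WithLp.equiv 2 _).symm u with hu'
  have h := (toEuclideanCLM (𝕜 := 𝕜) Z).le_opNorm u'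
  rw [clm_apply_eq] at h
  have hc' : (0 : ℝ) ≤ c := le_trans (norm_nonneg _) hZ
  have h2 : ‖(WithLp.equiv 2 _).symm (Z *ᵥ (WithLp.equiv 2 _ u'))‖ ≤ c * ‖u'‖ := by
    refine h.trans (mul_le_mul_of_nonneg_right ?_ (norm_nonneg _))
    rw [← Matrix.cstar_norm_def]; exact hZ
  have h3 := pow_le_pow_left₀ (norm_nonneg _) h2 2
  rw [mul_pow, euclid_sq ((WithLp.equiv 2 _).symm (Z *ᵥ (WithLp.equiv 2 _ u'))),
    euclid_sq u'] at h3
  simpa [hu', WithLp.equiv_symm_apply, PiLp.toLp_apply, WithLp.equiv_apply] using h3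

lemma norm_fromBlocks_le {α β : Type*} [Fintype α] [DecidableEq α] [Fintype β] [DecidableEq β]
    (X : Matrix α α 𝕜) (Y : Matrix β β 𝕜) {c : ℝ} (hc : 0 ≤ c) (hX : ‖X‖ ≤ c) (hY : ‖Y‖ ≤ c) :
    ‖Matrix.fromBlocks X 0 0 Y‖ ≤ c := by
  rw [Matrix.cstar_norm_def]
  refine ContinuousLinearMap.opNorm_le_bound _ hc fun x => ?_
  have hsq : ‖toEuclideanCLM (𝕜 := 𝕜) (Matrix.fromBlocks X 0 0 Y) x‖ ^ 2 ≤ (c * ‖x‖) ^ 2 := by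
    rw [clm_apply_eq, euclid_sq ((WithLp.equiv 2 _).symm
      ((Matrix.fromBlocks X 0 0 Y) *ᵥ (WithLp.equiv 2 _ x))), mul_pow, euclid_sq x]
    set v : (α ⊕ β) → 𝕜 := WithLp.equiv 2 _ x with hv
    have hxv : ∀ i, x i = v i := fun i => rfl
    rw [Fintype.sum_sum_type, Fintype.sum_sum_type]
    simp only [WithLp.equiv_symm_apply, PiLp.toLp_apply, Matrix.fromBlocks_mulVec, Sum.elim_inl, Sum.elim_inr,
      Matrix.zero_mulVec, add_zero, zero_add, Pi.add_apply, hxv]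
    rw [mul_add]
    exact add_le_add (key_bound X hX (v ∘ Sum.inl)) (key_bound Y hY (v ∘ Sum.inr))
  have := Real.sqrt_le_sqrt hsq
  rwa [Real.sqrt_sq (norm_nonneg _), Real.sqrt_sq (by positivity)] at this

lemma norm_one_le' {α : Type*} [Fintype α] [DecidableEq α] :
    ‖(1 : Matrix α α 𝕜)‖ ≤ 1 := by
  rw [Matrix.cstar_norm_def, _root_.map_one]
  exact ContinuousLinearMap.norm_id_le

lemma fromBlocks_sub' {l m n o : Type*}
    (A A' : Matrix n l 𝕜) (B B' : Matrix n m 𝕜) (C C' : Matrix o l 𝕜) (D D' : Matrix o m 𝕜) :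
    Matrix.fromBlocks A B C D - Matrix.fromBlocks A' B' C' D' =
      Matrix.fromBlocks (A - A') (B - B') (C - C') (D - D') := by
  ext (i | i) (j | j) <;> simp

lemma aux_norm {α β : Type*} [Fintype α] [DecidableEq α] [Fintype β] [DecidableEq β]
    (B : Matrix α α 𝕜) (E : Matrix β β 𝕜) (hB : Bᴴ * B = (2⁻¹ : 𝕜) • 1)
    (hE : ‖E‖ ≤ (Real.sqrt 2)⁻¹) :
    ‖Matrix.fromBlocks B 0 0 E‖ ≤ (Real.sqrt 2)⁻¹ := by
  have hDD : (Matrix.fromBlocks B 0 0 E)ᴴ * (Matrix.fromBlocks B 0 0 E) =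
      Matrix.fromBlocks ((2⁻¹ : 𝕜) • 1) 0 0 (Eᴴ * E) := by
    rw [Matrix.fromBlocks_conjTranspose, Matrix.fromBlocks_multiply]
    simp [hB]
  have hhalf : ‖((2⁻¹ : 𝕜) • 1 : Matrix α α 𝕜)‖ ≤ (2⁻¹ : ℝ) := by
    rw [norm_smul]
    calc ‖(2⁻¹ : 𝕜)‖ * ‖(1 : Matrix α α 𝕜)‖ ≤ ‖(2⁻¹ : 𝕜)‖ * 1 :=
          mul_le_mul_of_nonneg_left norm_one_le' (norm_nonneg _)
      _ = (2⁻¹ : ℝ) := by rw [mul_one, norm_inv, RCLike.norm_ofNat]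
  have hsqrt2 : (Real.sqrt 2)⁻¹ * (Real.sqrt 2)⁻¹ = (2⁻¹ : ℝ) := by
    rw [← mul_inv, Real.mul_self_sqrt (by norm_num)]
  have hEE : ‖Eᴴ * E‖ ≤ (2⁻¹ : ℝ) := by
    rw [Matrix.l2_opNorm_conjTranspose_mul_self, ← hsqrt2]
    exact mul_le_mul hE hE (norm_nonneg _) (by positivity)
  have hD2 : ‖Matrix.fromBlocks B 0 0 E‖ * ‖Matrix.fromBlocks B 0 0 E‖ ≤ (2⁻¹ : ℝ) := by
    rw [← Matrix.l2_opNorm_conjTranspose_mul_self, hDD]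
    exact norm_fromBlocks_le _ _ (by norm_num) hhalf hEE
  have := Real.sqrt_le_sqrt hD2
  rwa [Real.sqrt_mul_self (norm_nonneg _), Real.sqrt_inv] at this

lemma block_sq {k : Type*} [Fintype k] [DecidableEq k] (U : Matrix k k 𝕜)
    (hU1 : U * Uᴴ = 1) (hU2 : Uᴴ * U = 1) (a d : 𝕜) :
    (Matrix.fromBlocks (a • 1) ((1/2 : 𝕜) • U) ((1/2 : 𝕜) • Uᴴ) (d • 1)) *
      (Matrix.fromBlocks (a • 1) ((1/2 : 𝕜) • U) ((1/2 : 𝕜) • Uᴴ) (d • 1)) =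
    Matrix.fromBlocks ((a * a + 1/4) • 1) (((a + d) * (1/2)) • U)
      (((a + d) * (1/2)) • Uᴴ) ((d * d + 1/4) • 1) := by
  have e11 : (a • (1 : Matrix k k 𝕜)) * (a • 1) + ((1/2 : 𝕜) • U) * ((1/2 : 𝕜) • Uᴴ)
      = (a * a + 1/4) • (1 : Matrix k k 𝕜) := by
    rw [Matrix.smul_mul, Matrix.mul_smul, Matrix.smul_mul, Matrix.mul_smul, hU1, Matrix.one_mul,
      smul_smul, smul_smul, ← add_smul]
    norm_num
  have e12 : (a • (1 : Matrix k k 𝕜)) * ((1/2 : 𝕜) • U) + ((1/2 : 𝕜) • U) * (d • 1)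
      = ((a + d) * (1/2)) • U := by
    rw [Matrix.smul_mul, Matrix.mul_smul, Matrix.smul_mul, Matrix.mul_smul, Matrix.one_mul,
      Matrix.mul_one, smul_smul, smul_smul, ← add_smul,
      show a * (1/2 : 𝕜) + (1/2) * d = (a + d) * (1/2) by ring]
  have e21 : ((1/2 : 𝕜) • Uᴴ) * (a • (1 : Matrix k k 𝕜)) + (d • (1 : Matrix k k 𝕜))
      * ((1/2 : 𝕜) • Uᴴ) = ((a + d) * (1/2)) • Uᴴ := by
    rw [Matrix.smul_mul, Matrix.mul_smul, Matrix.smul_mul, Matrix.mul_smul, Matrix.one_mul,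
      Matrix.mul_one, smul_smul, smul_smul, ← add_smul,
      show (1/2 : 𝕜) * a + d * (1/2) = (a + d) * (1/2) by ring]
  have e22 : ((1/2 : 𝕜) • Uᴴ) * ((1/2 : 𝕜) • U) + (d • (1 : Matrix k k 𝕜)) * (d • 1)
      = (d * d + 1/4) • (1 : Matrix k k 𝕜) := by
    rw [Matrix.smul_mul, Matrix.mul_smul, Matrix.smul_mul, Matrix.mul_smul, hU2, Matrix.one_mul,
      smul_smul, smul_smul, ← add_smul]
    norm_num
    rw [add_comm]
  rw [Matrix.fromBlocks_multiply, e11, e12, e21, e22]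

end Aux

/-- Relative to the orthogonal decomposition `H = H₁ ⊕ H₂ ⊕ H₃` (with `dim H₁ = dim H₂ = r`,
`dim H₃ = m`), let `P = diag(I_r, 0, P₁)`, `Q = diag(0, I_r, Q₁)` and
`R = [[½I, ½U, 0], [½U*, ½I, 0], [0, 0, R₁]]` where `U` is an `r × r` unitary
(orthogonal in the real case) matrix.  Then `R` is an orthogonal projection of rank `n`, and if
`‖R₁ − P₁‖ ≤ 1/√2` and `‖R₁ − Q₁‖ ≤ 1/√2` then `‖R − P‖ ≤ 1/√2` and `‖R − Q‖ ≤ 1/√2`. -/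
theorem stmt5 {𝕜 : Type*} [RCLike 𝕜] (r n m : ℕ) (hr : 0 < r) (hrn : r ≤ n)
    (P₁ Q₁ R₁ : Matrix (Fin m) (Fin m) 𝕜)
    (hP₁ : IsProjMatOfRank (n - r) P₁) (hQ₁ : IsProjMatOfRank (n - r) Q₁)
    (hR₁ : IsProjMatOfRank (n - r) R₁)
    (U : Matrix (Fin r) (Fin r) 𝕜) (hU : U ∈ Matrix.unitaryGroup (Fin r) 𝕜)
    (P Q R : Matrix ((Fin r ⊕ Fin r) ⊕ Fin m) ((Fin r ⊕ Fin r) ⊕ Fin m) 𝕜)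
    (hP : P = Matrix.fromBlocks (Matrix.fromBlocks 1 0 0 0) 0 0 P₁)
    (hQ : Q = Matrix.fromBlocks (Matrix.fromBlocks 0 0 0 1) 0 0 Q₁)
    (hR : R = Matrix.fromBlocks
      (Matrix.fromBlocks ((1/2 : 𝕜) • 1) ((1/2 : 𝕜) • U) ((1/2 : 𝕜) • U.conjTranspose) ((1/2 : 𝕜) • 1))
      0 0 R₁) :
    IsProjMatOfRank n R ∧
      (matOpNorm (R₁ - P₁) ≤ (Real.sqrt 2)⁻¹ → matOpNorm (R₁ - Q₁) ≤ (Real.sqrt 2)⁻¹ →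
        matOpNorm (R - P) ≤ (Real.sqrt 2)⁻¹ ∧ matOpNorm (R - Q) ≤ (Real.sqrt 2)⁻¹) := by
  obtain ⟨hP₁H, hP₁I, hP₁r⟩ := hP₁
  obtain ⟨hQ₁H, hQ₁I, hQ₁r⟩ := hQ₁
  obtain ⟨hR₁H, hR₁I, hR₁r⟩ := hR₁
  have hU1 : U * Uᴴ = 1 := by
    simpa [Matrix.star_eq_conjTranspose] using hU.2
  have hU2 : Uᴴ * U = 1 := by
    simpa [Matrix.star_eq_conjTranspose] using hU.1
  have hstar : star (1/2 : 𝕜) = (1/2 : 𝕜) := by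
    rw [star_div₀, star_one]
    norm_num
  set A : Matrix (Fin r ⊕ Fin r) (Fin r ⊕ Fin r) 𝕜 :=
    Matrix.fromBlocks ((1/2 : 𝕜) • 1) ((1/2 : 𝕜) • U) ((1/2 : 𝕜) • Uᴴ) ((1/2 : 𝕜) • 1) with hA
  have hAH : Aᴴ = A := by
    rw [hA, Matrix.fromBlocks_conjTranspose]
    simp [Matrix.conjTranspose_smul, hstar]
  have hAA : A * A = A := by
    rw [hA, block_sq U hU1 hU2]
    norm_num
  -- projection of rank n
  have hRH : Rᴴ = R := by
    rw [hR, Matrix.fromBlocks_conjTranspose, hAH, hR₁H]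
    simp
  have hRR : R * R = R := by
    rw [hR, Matrix.fromBlocks_multiply]
    simp [hAA, hR₁I]
  have htrR₁ : R₁.trace = ((n - r : ℕ) : 𝕜) := by
    rw [trace_of_idem R₁ hR₁I, hR₁r]
  have htrR : R.trace = (n : 𝕜) := by
    rw [hR, trace_fromBlocks', hA, trace_fromBlocks', Matrix.trace_smul,
      Matrix.trace_one, htrR₁, Nat.cast_sub hrn]
    simp only [Fintype.card_fin, smul_eq_mul]
    ring
  have hrank : R.rank = n := by
    have h : (R.rank : 𝕜) = (n : 𝕜) := by rw [← trace_of_idem R hRR, htrR]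
    exact_mod_cast h
  refine ⟨⟨hRH, hRR, hrank⟩, fun h1 h2 => ?_⟩
  rw [matOpNorm_eq] at h1 h2 ⊢
  have hhalfneg : ((1/2 : 𝕜) - 1) = -(1/2 : 𝕜) := by norm_num
  constructor
  · -- R - P
    have hB : R - P = Matrix.fromBlocks
        (Matrix.fromBlocks ((-(1/2) : 𝕜) • 1) ((1/2 : 𝕜) • U) ((1/2 : 𝕜) • Uᴴ) ((1/2 : 𝕜) • 1))
        0 0 (R₁ - P₁) := by
      have hone : (1/2 : 𝕜) • (1 : Matrix (Fin r) (Fin r) 𝕜) - 1 = (-(1/2) : 𝕜) • 1 := by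
        rw [← hhalfneg, sub_smul, one_smul]
      rw [hR, hP, hA, fromBlocks_sub', fromBlocks_sub', hone]
      simp only [sub_zero]
    rw [hB]
    set B : Matrix (Fin r ⊕ Fin r) (Fin r ⊕ Fin r) 𝕜 :=
      Matrix.fromBlocks ((-(1/2) : 𝕜) • 1) ((1/2 : 𝕜) • U) ((1/2 : 𝕜) • Uᴴ) ((1/2 : 𝕜) • 1) with hBdef
    have hBH : Bᴴ = B := by
      rw [hBdef, Matrix.fromBlocks_conjTranspose]
      simp [Matrix.conjTranspose_smul, hstar]
    have hBB : Bᴴ * B = (2⁻¹ : 𝕜) • 1 := by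
      have hsp : ((2:𝕜))⁻¹ • (1 : Matrix (Fin r ⊕ Fin r) (Fin r ⊕ Fin r) 𝕜) =
          Matrix.fromBlocks (((2:𝕜))⁻¹ • 1) 0 0 (((2:𝕜))⁻¹ • 1) := by
        rw [← Matrix.fromBlocks_one, Matrix.fromBlocks_smul]
        simp
      rw [hBH, hBdef, block_sq U hU1 hU2, hsp,
        show ((-(1/2) : 𝕜) * (-(1/2)) + 1/4) = (2:𝕜)⁻¹ from by norm_num,
        show ((-(1/2) : 𝕜) + 1/2) * (1/2) = 0 from by norm_num,
        show ((1/2 : 𝕜) * (1/2) + 1/4) = (2:𝕜)⁻¹ from by norm_num,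
        zero_smul, zero_smul]
    exact aux_norm B (R₁ - P₁) hBB h1
  · -- R - Q
    have hB : R - Q = Matrix.fromBlocks
        (Matrix.fromBlocks ((1/2 : 𝕜) • 1) ((1/2 : 𝕜) • U) ((1/2 : 𝕜) • Uᴴ) ((-(1/2) : 𝕜) • 1))
        0 0 (R₁ - Q₁) := by
      have hone : (1/2 : 𝕜) • (1 : Matrix (Fin r) (Fin r) 𝕜) - 1 = (-(1/2) : 𝕜) • 1 := by
        rw [← hhalfneg, sub_smul, one_smul]
      rw [hR, hQ, hA, fromBlocks_sub', fromBlocks_sub', hone]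
      simp only [sub_zero]
    rw [hB]
    set B : Matrix (Fin r ⊕ Fin r) (Fin r ⊕ Fin r) 𝕜 :=
      Matrix.fromBlocks ((1/2 : 𝕜) • 1) ((1/2 : 𝕜) • U) ((1/2 : 𝕜) • Uᴴ) ((-(1/2) : 𝕜) • 1) with hBdef
    have hBH : Bᴴ = B := by
      rw [hBdef, Matrix.fromBlocks_conjTranspose]
      simp [Matrix.conjTranspose_smul, hstar]
    have hBB : Bᴴ * B = (2⁻¹ : 𝕜) • 1 := by
      have hsp : ((2:𝕜))⁻¹ • (1 : Matrix (Fin r ⊕ Fin r) (Fin r ⊕ Fin r) 𝕜) =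
          Matrix.fromBlocks (((2:𝕜))⁻¹ • 1) 0 0 (((2:𝕜))⁻¹ • 1) := by
        rw [← Matrix.fromBlocks_one, Matrix.fromBlocks_smul]
        simp
      rw [hBH, hBdef, block_sq U hU1 hU2, hsp,
        show ((1/2 : 𝕜) + -(1/2)) * (1/2) = 0 from by norm_num,
        show ((-(1/2) : 𝕜) * (-(1/2)) + 1/4) = (2:𝕜)⁻¹ from by norm_num,
        show ((1/2 : 𝕜) * (1/2) + 1/4) = (2:𝕜)⁻¹ from by norm_num,
        zero_smul, zero_smul]
    exact aux_norm B (R₁ - Q₁) hBB h2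
end

section
/- Two rank-n orthogonal projections P and Q on a Hilbert space are adjacent (i.e., dim(im P + im Q) = n + 1, equivalently dim(im P ∩ im Q) = n − 1) if and only if rank(P − Q) = 2. -/
section Aux

variable {𝕜 H : Type*} [RCLike 𝕜] [NormedAddCommGroup H] [InnerProductSpace 𝕜 H]
  [CompleteSpace H]

local notation "⟪" x ", " y "⟫" => @inner 𝕜 _ _ x y

private lemma fix_of_mem_range {P : H →L[𝕜] H} (hidem : P ∘L P = P) {x : H}
    (hx : x ∈ LinearMap.range (P : H →ₗ[𝕜] H)) : P x = x := by
  obtain ⟨y, rfl⟩ := hx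
  exact DFunLike.congr_fun hidem y

private lemma zero_of_mem_orthogonal {P : H →L[𝕜] H} (hsa : IsSelfAdjoint P)
    (hidem : P ∘L P = P) {z : H} (hz : z ∈ (LinearMap.range (P : H →ₗ[𝕜] H))ᗮ) : P z = 0 := by
  have hS := hsa.isSymmetric
  have h1 : P (P z) = P z := fix_of_mem_range hidem ⟨z, rfl⟩
  have h2 : ⟪P (P z), z⟫ = ⟪P z, P z⟫ := hS (P z) z
  have h3 : ⟪P z, z⟫ = 0 := hz (P z) ⟨z, rfl⟩
  rw [h1, h3] at h2
  exact inner_self_eq_zero.mp h2.symm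

end Aux

/-- Two rank-`n` orthogonal projections are adjacent, i.e. `dim(im P + im Q) = n + 1`
(equivalently `dim(im P ∩ im Q) = n − 1`), if and only if `rank (P − Q) = 2`. -/
theorem stmt12 {𝕜 H : Type*} [RCLike 𝕜] [NormedAddCommGroup H] [InnerProductSpace 𝕜 H]
    [CompleteSpace H] (n : ℕ) (hn : 0 < n) (P Q : H →L[𝕜] H) (hne : P ≠ Q)
    (hP : IsOrthProjOfRank n P) (hQ : IsOrthProjOfRank n Q) :
    (Module.finrank 𝕜 ↥(LinearMap.range (P : H →ₗ[𝕜] H) ⊔ LinearMap.range (Q : H →ₗ[𝕜] H)) = n + 1 ↔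
        Module.finrank 𝕜 ↥(LinearMap.range ((P - Q : H →L[𝕜] H) : H →ₗ[𝕜] H)) = 2) ∧
      (Module.finrank 𝕜 ↥(LinearMap.range (P : H →ₗ[𝕜] H) ⊓ LinearMap.range (Q : H →ₗ[𝕜] H)) = n - 1 ↔
        Module.finrank 𝕜 ↥(LinearMap.range ((P - Q : H →L[𝕜] H) : H →ₗ[𝕜] H)) = 2) := by
  obtain ⟨hPsa, hPi, hPr⟩ := hP
  obtain ⟨hQsa, hQi, hQr⟩ := hQ
  set U := LinearMap.range (P : H →ₗ[𝕜] H) with hUdef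
  set V := LinearMap.range (Q : H →ₗ[𝕜] H) with hVdef
  haveI : FiniteDimensional 𝕜 U := FiniteDimensional.of_finrank_pos (hPr ▸ hn)
  haveI : FiniteDimensional 𝕜 V := FiniteDimensional.of_finrank_pos (hQr ▸ hn)
  set W := U ⊔ V with hWdef
  haveI : FiniteDimensional 𝕜 W := Submodule.finiteDimensional_sup U V
  have hUW : U ≤ W := le_sup_left
  have hVW : V ≤ W := le_sup_right
  have hPfix : ∀ x ∈ U, P x = x := fun x hx => fix_of_mem_range hPi hx
  have hQfix : ∀ x ∈ V, Q x = x := fun x hx => fix_of_mem_range hQi hx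
  have hPz : ∀ z ∈ Wᗮ, P z = 0 := fun z hz =>
    zero_of_mem_orthogonal hPsa hPi (Submodule.orthogonal_le hUW hz)
  have hQz : ∀ z ∈ Wᗮ, Q z = 0 := fun z hz =>
    zero_of_mem_orthogonal hQsa hQi (Submodule.orthogonal_le hVW hz)
  have hPS := hPsa.isSymmetric
  have hQS := hQsa.isSymmetric
  have hinv : ∀ x, x ∈ W → ((P - Q : H →L[𝕜] H) : H →ₗ[𝕜] H) x ∈ W := by
    intro x _
    show P x - Q x ∈ W
    exact Submodule.sub_mem W (hUW ⟨x, rfl⟩) (hVW ⟨x, rfl⟩)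
  set f : ↥W →ₗ[𝕜] ↥W := ((P - Q : H →L[𝕜] H) : H →ₗ[𝕜] H).restrict hinv with hfdef
  -- Claim 1 : range (P - Q) = map W.subtype (range f)
  have claim1 : LinearMap.range ((P - Q : H →L[𝕜] H) : H →ₗ[𝕜] H) = Submodule.map W.subtype (LinearMap.range f) := by
    apply le_antisymm
    · rintro _ ⟨x, rfl⟩
      obtain ⟨w, hw, z, hz, rfl⟩ := W.exists_add_mem_mem_orthogonal x
      have hz0 : (P - Q) z = 0 := by
        show P z - Q z = 0
        rw [hPz z hz, hQz z hz, sub_zero]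
      have heq : (P - Q) (w + z) = (P - Q) w := by
        rw [map_add, hz0, add_zero]
      rw [ContinuousLinearMap.coe_coe, heq]
      exact ⟨f ⟨w, hw⟩, ⟨⟨w, hw⟩, rfl⟩, rfl⟩
    · rintro _ ⟨y, ⟨⟨w, hw⟩, rfl⟩, rfl⟩
      exact ⟨w, rfl⟩
  -- Claim 2 : ker f = comap W.subtype (U ⊓ V)
  have claim2 : LinearMap.ker f = Submodule.comap W.subtype (U ⊓ V) := by
    ext ⟨x, hx⟩
    simp only [LinearMap.mem_ker, Submodule.mem_comap, Submodule.mem_inf]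
    constructor
    · intro h0
      have h0' : P x - Q x = 0 := congrArg Subtype.val h0
      have hPQ : P x = Q x := sub_eq_zero.mp h0'
      have hyU : P x ∈ U := ⟨x, rfl⟩
      have hyV : P x ∈ V := ⟨x, hPQ.symm⟩
      have hPy : P (P x) = P x := hPfix _ hyU
      have hQy : Q (P x) = P x := hQfix _ hyV
      have hdiff : x - P x ∈ Wᗮ := by
        intro u hu
        obtain ⟨a, ha, b, hb, rfl⟩ := Submodule.mem_sup.mp hu
        have hPd : P (x - P x) = 0 := by
          rw [map_sub, hPy]; exact sub_self _
        have hQd : Q (x - P x) = 0 := by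
          rw [map_sub, hQy, hPQ]; exact sub_self _
        have ha' : (inner (𝕜 := 𝕜) a (x - P x)) = 0 := by
          rw [← hPfix a ha]
          calc (inner (𝕜 := 𝕜) (P a) (x - P x)) = inner 𝕜 a (P (x - P x)) := hPS a (x - P x)
            _ = 0 := by rw [hPd, inner_zero_right]
        have hb' : (inner (𝕜 := 𝕜) b (x - P x)) = 0 := by
          rw [← hQfix b hb]
          calc (inner (𝕜 := 𝕜) (Q b) (x - P x)) = inner 𝕜 b (Q (x - P x)) := hQS b (x - P x)
            _ = 0 := by rw [hQd, inner_zero_right]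
        rw [inner_add_left, ha', hb', add_zero]
      have hdW : x - P x ∈ W := Submodule.sub_mem W hx (hUW hyU)
      have hxy : x - P x = 0 :=
        Submodule.disjoint_def.mp W.orthogonal_disjoint (x - P x) hdW hdiff
      have hxeq : x = P x := sub_eq_zero.mp hxy
      show x ∈ U ∧ x ∈ V
      rw [hxeq]
      exact ⟨hyU, hyV⟩
    · rintro ⟨hxU, hxV⟩
      apply Subtype.ext
      show P x - Q x = 0
      rw [hPfix x hxU, hQfix x hxV, sub_self]
  -- finrank computations
  have h1 : Module.finrank 𝕜 ↥(LinearMap.range ((P - Q : H →L[𝕜] H) : H →ₗ[𝕜] H)) = Module.finrank 𝕜 ↥(LinearMap.range f) := by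
    rw [claim1, Submodule.finrank_map_subtype_eq]
  have h2 : Module.finrank 𝕜 ↥(LinearMap.range f) + Module.finrank 𝕜 ↥(LinearMap.ker f)
      = Module.finrank 𝕜 ↥W := LinearMap.finrank_range_add_finrank_ker f
  have hle : U ⊓ V ≤ W := le_trans inf_le_left hUW
  have h3 : Module.finrank 𝕜 ↥(LinearMap.ker f) = Module.finrank 𝕜 ↥(U ⊓ V) := by
    rw [claim2]
    exact (Submodule.comapSubtypeEquivOfLe hle).finrank_eq
  have h4 : Module.finrank 𝕜 ↥W + Module.finrank 𝕜 ↥(U ⊓ V)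
      = Module.finrank 𝕜 ↥U + Module.finrank 𝕜 ↥V :=
    Submodule.finrank_sup_add_finrank_inf_eq U V
  rw [hPr, hQr] at h4
  rw [h3] at h2
  constructor
  · rw [h1]; omega
  · rw [h1]; omega
end

section
/- Let n ≥ 2 and dim H ≥ 2n + 1. For distinct P, Q ∈ P_n(H), P and Q are adjacent (dim(im P ∩ im Q) = n − 1) if and only if for every R ∈ P_n(H) \ {P,Q}^⊤, the set ({R} ∪ {P,Q}^⊤)^⊤ contains at most one projection. -/
/-- For `A ⊆ P_n(H)`, the set `A^⊤ = {Q ∈ P_n(H) : Q P = 0 for all P ∈ A}`. -/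
def orthTop {𝕜 H : Type*} [RCLike 𝕜] [NormedAddCommGroup H]
    [InnerProductSpace 𝕜 H] [CompleteSpace H] (n : ℕ) (A : Set (H →L[𝕜] H)) :
    Set (H →L[𝕜] H) :=
  {Q | IsOrthProjOfRank n Q ∧ ∀ P ∈ A, Q ∘L P = 0}

set_option linter.unusedSectionVars false

open Module Submodule

section Helpers

variable {𝕜 H : Type*} [RCLike 𝕜] [NormedAddCommGroup H] [InnerProductSpace 𝕜 H]
  [CompleteSpace H]

local notation "⟪" x ", " y "⟫" => inner (𝕜 := 𝕜) x y

/-- A self-adjoint idempotent kills `P` iff the range of `P` is orthogonal to its range. -/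
lemma comp_eq_zero_iff_le_orthogonal {T : H →L[𝕜] H} (hT : IsSelfAdjoint T)
    (hT2 : T ∘L T = T) (P : H →L[𝕜] H) :
    T ∘L P = 0 ↔ LinearMap.range (P : H →ₗ[𝕜] H) ≤ (LinearMap.range (T : H →ₗ[𝕜] H))ᗮ := by
  constructor
  · intro h
    rintro x ⟨y, rfl⟩
    rw [Submodule.mem_orthogonal]
    rintro u ⟨z, rfl⟩
    have : T (P y) = 0 := by
      have := congrArg (fun f => (f : H →L[𝕜] H) y) h
      simpa using this
    calc ⟪T z, P y⟫ = ⟪z, T (P y)⟫ := hT.isSymmetric z (P y)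
      _ = 0 := by rw [this, inner_zero_right]
  · intro h
    ext y
    simp only [ContinuousLinearMap.comp_apply, ContinuousLinearMap.zero_apply]
    have h1 : P y ∈ (LinearMap.range (T : H →ₗ[𝕜] H))ᗮ := h ⟨y, rfl⟩
    have h2 : ⟪T (P y), T (P y)⟫ = ⟪P y, T (T (P y))⟫ := hT.isSymmetric (P y) (T (P y))
    have h3 : T (T (P y)) = T (P y) := by
      have := congrArg (fun f => (f : H →L[𝕜] H) (P y)) hT2
      simpa using this
    have h4 : ⟪T (P y), P y⟫ = 0 := (Submodule.mem_orthogonal _ _).mp h1 _ ⟨P y, rfl⟩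
    have h5 : ⟪P y, T (P y)⟫ = 0 := by rwa [← inner_eq_zero_symm]
    rw [h3, h5] at h2
    exact inner_self_eq_zero.mp h2

lemma sub_apply_mem_orthogonal_range {T : H →L[𝕜] H} (hT : IsSelfAdjoint T)
    (hT2 : T ∘L T = T) (x : H) : x - T x ∈ (LinearMap.range (T : H →ₗ[𝕜] H))ᗮ := by
  rw [Submodule.mem_orthogonal]
  rintro u ⟨z, rfl⟩
  have h3 : T (T x) = T x := by
    have := congrArg (fun f => (f : H →L[𝕜] H) x) hT2
    simpa using this
  calc ⟪T z, x - T x⟫ = ⟪z, T (x - T x)⟫ := hT.isSymmetric z _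
    _ = 0 := by rw [map_sub, h3, sub_self, inner_zero_right]

/-- Two self-adjoint idempotents with equal range are equal. -/
lemma proj_ext {T₁ T₂ : H →L[𝕜] H} (h₁ : IsSelfAdjoint T₁) (h₁2 : T₁ ∘L T₁ = T₁)
    (h₂ : IsSelfAdjoint T₂) (h₂2 : T₂ ∘L T₂ = T₂)
    (hr : LinearMap.range (T₁ : H →ₗ[𝕜] H) = LinearMap.range (T₂ : H →ₗ[𝕜] H)) : T₁ = T₂ := by
  ext x
  have m1 : T₁ x - T₂ x ∈ LinearMap.range (T₁ : H →ₗ[𝕜] H) := by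
    refine sub_mem ⟨x, rfl⟩ ?_
    rw [hr]; exact ⟨x, rfl⟩
  have m2 : T₁ x - T₂ x ∈ (LinearMap.range (T₁ : H →ₗ[𝕜] H))ᗮ := by
    have e1 := sub_apply_mem_orthogonal_range h₁ h₁2 x
    have e2 := sub_apply_mem_orthogonal_range h₂ h₂2 x
    rw [← hr] at e2
    have := sub_mem e2 e1
    simpa using this
  have : T₁ x - T₂ x ∈ (⊥ : Submodule 𝕜 H) := by
    rw [← Submodule.inf_orthogonal_eq_bot (LinearMap.range (T₁ : H →ₗ[𝕜] H))]
    exact ⟨m1, m2⟩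
  rw [Submodule.mem_bot] at this
  exact sub_eq_zero.mp this

variable (𝕜) in
/-- The orthogonal projection onto `U` as a continuous linear map `H →L[𝕜] H`. -/
noncomputable def prCLM (U : Submodule 𝕜 H) [CompleteSpace U] : H →L[𝕜] H :=
  U.subtypeL ∘L orthogonalProjection U

lemma prCLM_selfAdjoint (U : Submodule 𝕜 H) [CompleteSpace U] :
    IsSelfAdjoint (prCLM 𝕜 U) := isSelfAdjoint_starProjection U

lemma prCLM_apply_mem (U : Submodule 𝕜 H) [CompleteSpace U] (x : H) :
    prCLM 𝕜 U x ∈ U := by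
  simp only [prCLM, ContinuousLinearMap.comp_apply, Submodule.subtypeL_apply]
  exact (orthogonalProjection U x).2

lemma prCLM_apply_of_mem (U : Submodule 𝕜 H) [CompleteSpace U] {x : H} (hx : x ∈ U) :
    prCLM 𝕜 U x = x := by
  simp only [prCLM, ContinuousLinearMap.comp_apply, Submodule.subtypeL_apply]
  have := orthogonalProjection_mem_subspace_eq_self (K := U) ⟨x, hx⟩
  rw [show ((⟨x, hx⟩ : U) : H) = x from rfl] at this
  rw [this]

lemma prCLM_idem (U : Submodule 𝕜 H) [CompleteSpace U] :
    prCLM 𝕜 U ∘L prCLM 𝕜 U = prCLM 𝕜 U := by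
  ext x
  simp only [ContinuousLinearMap.comp_apply]
  exact prCLM_apply_of_mem U (prCLM_apply_mem U x)

lemma prCLM_range (U : Submodule 𝕜 H) [CompleteSpace U] :
    LinearMap.range (prCLM 𝕜 U : H →ₗ[𝕜] H) = U := by
  apply le_antisymm
  · rintro x ⟨y, rfl⟩
    exact prCLM_apply_mem U y
  · intro u hu
    exact ⟨u, prCLM_apply_of_mem U hu⟩

lemma prCLM_isOrthProj (U : Submodule 𝕜 H) [FiniteDimensional 𝕜 U] :
    haveI : CompleteSpace U := FiniteDimensional.complete 𝕜 U
    IsOrthProjOfRank (finrank 𝕜 U) (prCLM 𝕜 U) := by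
  haveI : CompleteSpace U := FiniteDimensional.complete 𝕜 U
  refine ⟨prCLM_selfAdjoint U, prCLM_idem U, ?_⟩
  rw [prCLM_range U]

/-- In a submodule of rank at least `r` there is a submodule of finrank exactly `r`. -/
lemma exists_finrank_eq (W : Submodule 𝕜 H) (r : ℕ) (h : (r : Cardinal) ≤ Module.rank 𝕜 W) :
    ∃ U : Submodule 𝕜 H, U ≤ W ∧ FiniteDimensional 𝕜 U ∧ finrank 𝕜 U = r := by
  obtain ⟨s, hcard, hli⟩ := le_rank_iff_exists_linearIndependent_finset.mp h
  have hli' : LinearIndependent 𝕜 (fun x : (s : Set W) => ((x : W) : H)) :=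
    hli.map' W.subtype (Submodule.ker_subtype W)
  refine ⟨Submodule.span 𝕜 (Set.range fun x : (s : Set W) => ((x : W) : H)), ?_, ?_, ?_⟩
  · rw [Submodule.span_le]
    rintro _ ⟨x, rfl⟩
    exact ((x : W)).2
  · exact FiniteDimensional.span_of_finite 𝕜 (Set.finite_range _)
  · rw [finrank_span_eq_card hli']
    simpa using hcard

/-- In a submodule of rank at least `r ≥ 1` containing `v`, there is a submodule of
finrank exactly `r` containing `v`. -/
lemma exists_finrank_eq_mem (W : Submodule 𝕜 H) (r : ℕ) (hr : 1 ≤ r)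
    (h : (r : Cardinal) ≤ Module.rank 𝕜 W) {v : H} (hv : v ∈ W) :
    ∃ U : Submodule 𝕜 H, U ≤ W ∧ v ∈ U ∧ FiniteDimensional 𝕜 U ∧ finrank 𝕜 U = r := by
  obtain ⟨U₀, hU₀le, hU₀fd, hU₀rank⟩ := exists_finrank_eq W r h
  by_cases hvU₀ : v ∈ U₀
  · exact ⟨U₀, hU₀le, hvU₀, hU₀fd, hU₀rank⟩
  · have hv0 : v ≠ 0 := fun h0 => hvU₀ (h0 ▸ U₀.zero_mem)
    have hrank' : ((r - 1 : ℕ) : Cardinal) ≤ Module.rank 𝕜 U₀ := by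
      rw [← finrank_eq_rank, hU₀rank]
      exact_mod_cast Nat.sub_le r 1
    obtain ⟨U₁, hU₁le, hU₁fd, hU₁rank⟩ := exists_finrank_eq U₀ (r - 1) hrank'
    have hvU₁ : v ∉ U₁ := fun hm => hvU₀ (hU₁le hm)
    refine ⟨(𝕜 ∙ v) ⊔ U₁, ?_, ?_, ?_, ?_⟩
    · exact sup_le ((Submodule.span_singleton_le_iff_mem v W).mpr hv)
        (hU₁le.trans hU₀le)
    · exact Submodule.mem_sup_left (Submodule.mem_span_singleton_self v)
    · infer_instance
    · have hdisj : Disjoint U₁ (𝕜 ∙ v) := (Submodule.disjoint_span_singleton' hv0).mpr hvU₁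
      have := Submodule.finrank_sup_add_finrank_inf_eq (𝕜 ∙ v) U₁
      rw [finrank_span_singleton hv0, hU₁rank] at this
      rw [(disjoint_comm.mp hdisj).eq_bot] at this  -- inf = ⊥
      simp only [finrank_bot, add_zero] at this
      omega

/-- Rank decomposition with the orthogonal complement. -/
lemma rank_add_rank_orthogonal' (M : Submodule 𝕜 H) [CompleteSpace M] :
    Module.rank 𝕜 M + Module.rank 𝕜 Mᗮ = Module.rank 𝕜 H := by
  have e := Submodule.prodEquivOfIsCompl M Mᗮ M.isCompl_orthogonal_of_hasOrthogonalProjection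
  rw [← e.rank_eq, rank_prod']

lemma le_rank_orthogonal {M : Submodule 𝕜 H} [FiniteDimensional 𝕜 M] {c : ℕ}
    (h : ((finrank 𝕜 M + c : ℕ) : Cardinal) ≤ Module.rank 𝕜 H) :
    (c : Cardinal) ≤ Module.rank 𝕜 Mᗮ := by
  haveI : CompleteSpace M := FiniteDimensional.complete 𝕜 M
  rw [← rank_add_rank_orthogonal' M, ← finrank_eq_rank 𝕜 M] at h
  push_cast at h
  rw [add_comm ((finrank 𝕜 M : Cardinal)) (c : Cardinal),
    add_comm ((finrank 𝕜 M : Cardinal)) (Module.rank 𝕜 Mᗮ)] at h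
  exact (Cardinal.add_le_add_iff_of_lt_aleph0 (Cardinal.nat_lt_aleph0 _)).mp h

end Helpers

/-- For `n ≥ 2`, `dim H ≥ 2n + 1` and distinct `P, Q ∈ P_n(H)`: `P` and `Q` are adjacent
(`dim(im P ∩ im Q) = n − 1`) iff for every `R ∈ P_n(H) \ {P,Q}^⊤` the set
`({R} ∪ {P,Q}^⊤)^⊤` contains at most one projection. -/
theorem stmt13 {𝕜 H : Type*} [RCLike 𝕜] [NormedAddCommGroup H] [InnerProductSpace 𝕜 H]
    [CompleteSpace H] (n : ℕ) (hn : 2 ≤ n)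
    (hdim : ((2 * n + 1 : ℕ) : Cardinal) ≤ Module.rank 𝕜 H)
    (P Q : H →L[𝕜] H) (hne : P ≠ Q)
    (hP : IsOrthProjOfRank n P) (hQ : IsOrthProjOfRank n Q) :
    Module.finrank 𝕜 ↥(LinearMap.range (P : H →ₗ[𝕜] H) ⊓ LinearMap.range (Q : H →ₗ[𝕜] H)) = n - 1 ↔
      ∀ R : H →L[𝕜] H, IsOrthProjOfRank n R → R ∉ orthTop n {P, Q} →
        Set.Subsingleton (orthTop n ({R} ∪ orthTop n {P, Q})) := by
  obtain ⟨hPsa, hPid, hPrk⟩ := hP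
  obtain ⟨hQsa, hQid, hQrk⟩ := hQ
  haveI : FiniteDimensional 𝕜 (LinearMap.range (P : H →ₗ[𝕜] H)) :=
    Module.finite_of_finrank_pos (by omega)
  haveI : FiniteDimensional 𝕜 (LinearMap.range (Q : H →ₗ[𝕜] H)) :=
    Module.finite_of_finrank_pos (by omega)
  set M := LinearMap.range (P : H →ₗ[𝕜] H) ⊔ LinearMap.range (Q : H →ₗ[𝕜] H) with hMdef
  haveI : FiniteDimensional 𝕜 M :=
    Submodule.finiteDimensional_sup (LinearMap.range (P : H →ₗ[𝕜] H)) (LinearMap.range (Q : H →ₗ[𝕜] H))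
  haveI : CompleteSpace M := FiniteDimensional.complete 𝕜 M
  have hMsum : finrank 𝕜 M + finrank 𝕜 ↥(LinearMap.range (P : H →ₗ[𝕜] H) ⊓ LinearMap.range (Q : H →ₗ[𝕜] H)) = n + n := by
    rw [hMdef, Submodule.finrank_sup_add_finrank_inf_eq, hPrk, hQrk]
  have hS_range : ∀ P' ∈ orthTop n {P, Q}, LinearMap.range (P' : H →ₗ[𝕜] H) ≤ Mᗮ := by
    intro P' hP'
    obtain ⟨⟨hsa, hid, _⟩, hcomp⟩ := hP'
    have h1 : LinearMap.range (P : H →ₗ[𝕜] H) ≤ (LinearMap.range (P' : H →ₗ[𝕜] H))ᗮ :=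
      (comp_eq_zero_iff_le_orthogonal hsa hid P).mp (hcomp P (by simp))
    have h2 : LinearMap.range (Q : H →ₗ[𝕜] H) ≤ (LinearMap.range (P' : H →ₗ[𝕜] H))ᗮ :=
      (comp_eq_zero_iff_le_orthogonal hsa hid Q).mp (hcomp Q (by simp))
    have hM' : M ≤ (LinearMap.range (P' : H →ₗ[𝕜] H))ᗮ := sup_le h1 h2
    exact (Submodule.le_orthogonal_orthogonal _).trans (Submodule.orthogonal_le hM')
  constructor
  · -- adjacency → subsingleton
    intro hk R hR hRS T₁ hT₁ T₂ hT₂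
    have hMrank : finrank 𝕜 M = n + 1 := by omega
    have hMperp : (n : Cardinal) ≤ Module.rank 𝕜 Mᗮ := by
      apply le_rank_orthogonal
      have e : finrank 𝕜 M + n = 2 * n + 1 := by omega
      rw [e]; exact hdim
    have key : ∀ T ∈ orthTop n ({R} ∪ orthTop n {P, Q}),
        LinearMap.range (T : H →ₗ[𝕜] H) = M ⊓ (LinearMap.range (R : H →ₗ[𝕜] H))ᗮ := by
      intro T hT
      obtain ⟨⟨hTsa, hTid, hTrk⟩, hTcomp⟩ := hT
      have hTM : LinearMap.range (T : H →ₗ[𝕜] H) ≤ M := by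
        have hperp : Mᗮ ≤ (LinearMap.range (T : H →ₗ[𝕜] H))ᗮ := by
          intro v hv
          obtain ⟨U, hUle, hvU, hUfd, hUrk⟩ :=
            exists_finrank_eq_mem Mᗮ n (by omega) hMperp hv
          haveI := hUfd
          haveI : CompleteSpace U := FiniteDimensional.complete 𝕜 U
          have hmem : prCLM 𝕜 U ∈ orthTop n ({P, Q} : Set (H →L[𝕜] H)) := by
            refine ⟨by have := prCLM_isOrthProj U; rwa [hUrk] at this, ?_⟩
            intro X hX
            have hXle : LinearMap.range (X : H →ₗ[𝕜] H) ≤ M := by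
              simp only [Set.mem_insert_iff, Set.mem_singleton_iff] at hX
              rcases hX with rfl | rfl
              · exact le_sup_left
              · exact le_sup_right
            rw [comp_eq_zero_iff_le_orthogonal (prCLM_selfAdjoint U) (prCLM_idem U),
              prCLM_range]
            exact hXle.trans ((Submodule.le_orthogonal_orthogonal M).trans
              (Submodule.orthogonal_le hUle))
          have h0 : T ∘L prCLM 𝕜 U = 0 := hTcomp _ (Set.mem_union_right _ hmem)
          have h1 := (comp_eq_zero_iff_le_orthogonal hTsa hTid _).mp h0
          rw [prCLM_range] at h1
          exact h1 hvU
        calc LinearMap.range (T : H →ₗ[𝕜] H) ≤ (LinearMap.range (T : H →ₗ[𝕜] H))ᗮᗮ :=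
              Submodule.le_orthogonal_orthogonal _
          _ ≤ Mᗮᗮ := Submodule.orthogonal_le hperp
          _ = M := Submodule.orthogonal_orthogonal M
      have hTR : LinearMap.range (T : H →ₗ[𝕜] H) ≤ (LinearMap.range (R : H →ₗ[𝕜] H))ᗮ := by
        have h0 : T ∘L R = 0 := hTcomp R (Set.mem_union_left _ rfl)
        have h1 := (comp_eq_zero_iff_le_orthogonal hTsa hTid R).mp h0
        exact (Submodule.le_orthogonal_orthogonal _).trans (Submodule.orthogonal_le h1)
      have hNle : M ⊓ (LinearMap.range (R : H →ₗ[𝕜] H))ᗮ ≤ M := inf_le_left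
      haveI : FiniteDimensional 𝕜 (M ⊓ (LinearMap.range (R : H →ₗ[𝕜] H))ᗮ : Submodule 𝕜 H) :=
        Submodule.finiteDimensional_of_le hNle
      have hNne : M ⊓ (LinearMap.range (R : H →ₗ[𝕜] H))ᗮ ≠ M := by
        intro heq
        apply hRS
        refine ⟨hR, ?_⟩
        intro X hX
        rw [comp_eq_zero_iff_le_orthogonal hR.1 hR.2.1]
        have hXle : LinearMap.range (X : H →ₗ[𝕜] H) ≤ M := by
          simp only [Set.mem_insert_iff, Set.mem_singleton_iff] at hX
          rcases hX with rfl | rfl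
          · exact le_sup_left
          · exact le_sup_right
        have hMle' : M ≤ (LinearMap.range (R : H →ₗ[𝕜] H))ᗮ := by
          rw [← heq]; exact inf_le_right
        exact hXle.trans hMle'
      have hNlt : finrank 𝕜 (M ⊓ (LinearMap.range (R : H →ₗ[𝕜] H))ᗮ : Submodule 𝕜 H) < n + 1 := by
        rw [← hMrank]
        exact Submodule.finrank_lt_finrank_of_lt (lt_of_le_of_ne hNle hNne)
      exact Submodule.eq_of_le_of_finrank_le (le_inf hTM hTR) (by omega)
    exact proj_ext hT₁.1.1 hT₁.1.2.1 hT₂.1.1 hT₂.1.2.1 ((key T₁ hT₁).trans (key T₂ hT₂).symm)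
  · -- subsingleton → adjacency
    intro hRHS
    by_contra hk
    have hkle : finrank 𝕜 ↥(LinearMap.range (P : H →ₗ[𝕜] H) ⊓ LinearMap.range (Q : H →ₗ[𝕜] H)) ≤ n := by
      have := Submodule.finrank_mono
        (inf_le_left : LinearMap.range (P : H →ₗ[𝕜] H) ⊓ LinearMap.range (Q : H →ₗ[𝕜] H) ≤ LinearMap.range (P : H →ₗ[𝕜] H))
      omega
    have hkn : finrank 𝕜 ↥(LinearMap.range (P : H →ₗ[𝕜] H) ⊓ LinearMap.range (Q : H →ₗ[𝕜] H)) ≠ n := by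
      intro h
      have h1 : LinearMap.range (P : H →ₗ[𝕜] H) ⊓ LinearMap.range (Q : H →ₗ[𝕜] H) = LinearMap.range (P : H →ₗ[𝕜] H) :=
        Submodule.eq_of_le_of_finrank_le inf_le_left (by omega)
      have h2 : LinearMap.range (P : H →ₗ[𝕜] H) ⊓ LinearMap.range (Q : H →ₗ[𝕜] H) = LinearMap.range (Q : H →ₗ[𝕜] H) :=
        Submodule.eq_of_le_of_finrank_le inf_le_right (by omega)
      exact hne (proj_ext hPsa hPid hQsa hQid (h1.symm.trans h2))
    set k := finrank 𝕜 ↥(LinearMap.range (P : H →ₗ[𝕜] H) ⊓ LinearMap.range (Q : H →ₗ[𝕜] H)) with hkdef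
    have hk2 : k ≤ n - 2 := by omega
    have hMperp : ((k + 1 : ℕ) : Cardinal) ≤ Module.rank 𝕜 Mᗮ := by
      apply le_rank_orthogonal
      have e : finrank 𝕜 M + (k + 1) = 2 * n + 1 := by omega
      rw [e]; exact hdim
    obtain ⟨t, W, hjt, htn, hWle, hWfd, hWrk⟩ :
        ∃ (t : ℕ) (W : Submodule 𝕜 H), k + 1 ≤ t ∧ t ≤ n - 1 ∧ W ≤ Mᗮ ∧
          FiniteDimensional 𝕜 W ∧ finrank 𝕜 W = t := by
      by_cases hcase : ((n - 1 : ℕ) : Cardinal) ≤ Module.rank 𝕜 Mᗮ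
      · obtain ⟨W, h1, h2, h3⟩ := exists_finrank_eq Mᗮ (n - 1) hcase
        exact ⟨n - 1, W, by omega, le_refl _, h1, h2, h3⟩
      · push_neg at hcase
        haveI : FiniteDimensional 𝕜 Mᗮ := Module.rank_lt_aleph0_iff.mp
          (hcase.trans (Cardinal.nat_lt_aleph0 _))
        refine ⟨finrank 𝕜 Mᗮ, Mᗮ, ?_, ?_, le_refl _, inferInstance, rfl⟩
        · have h := hMperp; rw [← finrank_eq_rank] at h; exact_mod_cast h
        · have h := hcase; rw [← finrank_eq_rank] at h
          have : finrank 𝕜 Mᗮ < n - 1 := by exact_mod_cast h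
          omega
    have hVrank : ((n - t : ℕ) : Cardinal) ≤ Module.rank 𝕜 M := by
      rw [← finrank_eq_rank]
      have : n - t ≤ finrank 𝕜 M := by omega
      exact_mod_cast this
    obtain ⟨V, hVle, hVfd, hVrk⟩ := exists_finrank_eq M (n - t) hVrank
    haveI := hWfd
    haveI := hVfd
    have hVW_disj : V ⊓ W = ⊥ := by
      have h := inf_le_inf hVle hWle
      rw [Submodule.inf_orthogonal_eq_bot, le_bot_iff] at h
      exact h
    haveI : FiniteDimensional 𝕜 (V ⊔ W : Submodule 𝕜 H) :=
      Submodule.finiteDimensional_sup V W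
    set A := V ⊔ W with hAdef
    have hArk : finrank 𝕜 A = n := by
      have h := Submodule.finrank_sup_add_finrank_inf_eq V W
      rw [hVW_disj] at h
      simp only [finrank_bot, add_zero] at h
      rw [← hAdef, hVrk, hWrk] at h
      omega
    haveI : CompleteSpace A := FiniteDimensional.complete 𝕜 A
    set R := prCLM 𝕜 A with hRdef
    have hRrange : LinearMap.range (R : H →ₗ[𝕜] H) = A := prCLM_range A
    have hRproj : IsOrthProjOfRank n R := by
      have := prCLM_isOrthProj A
      rwa [hArk] at this
    have hMA : ¬ M ≤ Aᗮ := by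
      intro hle
      have hV0 : V ≤ A ⊓ Aᗮ := le_inf le_sup_left (hVle.trans hle)
      rw [Submodule.inf_orthogonal_eq_bot, le_bot_iff] at hV0
      have h0 : finrank 𝕜 V = 0 := by rw [hV0]; exact finrank_bot 𝕜 H
      omega
    have hRS : R ∉ orthTop n {P, Q} := by
      intro hmem
      apply hMA
      have hAle : A ≤ Mᗮ := by rw [← hRrange]; exact hS_range R hmem
      exact (Submodule.le_orthogonal_orthogonal M).trans (Submodule.orthogonal_le hAle)
    set N := M ⊓ Vᗮ with hNdef
    haveI : FiniteDimensional 𝕜 N := Submodule.finiteDimensional_of_le inf_le_left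
    have hNA : N ≤ Aᗮ := by
      intro x hx
      obtain ⟨hxM, hxV⟩ := hx
      rw [Submodule.mem_orthogonal]
      intro u hu
      obtain ⟨y, hy, z, hz, rfl⟩ := Submodule.mem_sup.mp hu
      have h1 : (inner 𝕜 y x) = 0 := (Submodule.mem_orthogonal V x).mp hxV y hy
      have h2 : (inner 𝕜 z x) = 0 := by
        have h3 : (inner 𝕜 x z) = 0 := (Submodule.mem_orthogonal M z).mp (hWle hz) x hxM
        rwa [← inner_eq_zero_symm]
      rw [inner_add_left, h1, h2, add_zero]
    haveI : CompleteSpace V := FiniteDimensional.complete 𝕜 V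
    have hMle : M ≤ V ⊔ N := by
      intro x hx
      have hv : prCLM 𝕜 V x ∈ V := prCLM_apply_mem V x
      have hxv : x - prCLM 𝕜 V x ∈ Vᗮ := by
        have h := sub_starProjection_mem_orthogonal (K := V) x
        exact h
      exact Submodule.mem_sup.mpr ⟨prCLM 𝕜 V x, hv, x - prCLM 𝕜 V x,
        ⟨sub_mem hx (hVle hv), hxv⟩, by abel⟩
    have hNrank : n + 1 ≤ finrank 𝕜 N := by
      have h1 : finrank 𝕜 M ≤ finrank 𝕜 (V ⊔ N : Submodule 𝕜 H) :=
        Submodule.finrank_mono hMle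
      have h2 := Submodule.finrank_add_le_finrank_add_finrank V N
      omega
    have hNrank' : (n : Cardinal) ≤ Module.rank 𝕜 N := by
      rw [← finrank_eq_rank]
      have : n ≤ finrank 𝕜 N := by omega
      exact_mod_cast this
    obtain ⟨U₁, hU₁le, hU₁fd, hU₁rk⟩ := exists_finrank_eq N n hNrank'
    obtain ⟨v, hvN, hvU₁⟩ : ∃ v, v ∈ N ∧ v ∉ U₁ := by
      by_contra hcon
      push_neg at hcon
      have : U₁ = N := le_antisymm hU₁le hcon
      rw [this] at hU₁rk
      omega
    obtain ⟨U₂, hU₂le, hvU₂, hU₂fd, hU₂rk⟩ :=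
      exists_finrank_eq_mem N n (by omega) hNrank' hvN
    have hU₁₂ : U₁ ≠ U₂ := fun h => hvU₁ (h ▸ hvU₂)
    haveI := hU₁fd
    haveI := hU₂fd
    haveI : CompleteSpace U₁ := FiniteDimensional.complete 𝕜 U₁
    haveI : CompleteSpace U₂ := FiniteDimensional.complete 𝕜 U₂
    have hmemT : ∀ (U : Submodule 𝕜 H) [CompleteSpace U] [FiniteDimensional 𝕜 U],
        U ≤ N → finrank 𝕜 U = n →
        prCLM 𝕜 U ∈ orthTop n ({R} ∪ orthTop n {P, Q}) := by
      intro U _ _ hUle hUrk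
      refine ⟨by have := prCLM_isOrthProj U; rwa [hUrk] at this, ?_⟩
      intro X hX
      rw [comp_eq_zero_iff_le_orthogonal (prCLM_selfAdjoint U) (prCLM_idem U), prCLM_range]
      rcases hX with hXR | hXS
      · rw [Set.mem_singleton_iff] at hXR
        subst hXR
        rw [hRrange]
        have hUA : U ≤ Aᗮ := hUle.trans hNA
        exact (Submodule.le_orthogonal_orthogonal A).trans (Submodule.orthogonal_le hUA)
      · have h1 : LinearMap.range (X : H →ₗ[𝕜] H) ≤ Mᗮ := hS_range X hXS
        have hUM : U ≤ M := hUle.trans inf_le_left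
        exact h1.trans (Submodule.orthogonal_le hUM)
    have hT₁mem := hmemT U₁ hU₁le hU₁rk
    have hT₂mem := hmemT U₂ hU₂le hU₂rk
    have heq := hRHS R hRproj hRS hT₁mem hT₂mem
    apply hU₁₂
    rw [← prCLM_range (𝕜 := 𝕜) U₁, ← prCLM_range (𝕜 := 𝕜) U₂, heq]
end

section
/- Let P, Q be adjacent rank-n projections on H (n ≥ 2, dim H ≥ 2n+1), put in the normal form P = diag(I_{n−1}, [[1,0],[0,0]], 0) and Q = diag(I_{n−1}, [[d,√(d(1−d))],[√(d(1−d)),1−d]], 0) with 0 ≤ d < 1, relative to H = H₁ ⊕ H₂ ⊕ H₃ with dim H₁ = n−1, dim H₂ = 2. Then {P,Q}^⊤ equals the set of all rank-n projections R with im R ⊆ H₃, and this set is nonempty. -/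
section Aux

open Matrix

/-- Any block matrix supported in the `H₃`-corner annihilates `P` and `Q`. -/
lemma aux_annihilates {𝕜 : Type*} [RCLike 𝕜] {n m : ℕ}
    (R₃ : Matrix (Fin m) (Fin m) 𝕜)
    (A : Matrix (Fin 2) (Fin 2) 𝕜) :
    (Matrix.fromBlocks 0 0 0 (Matrix.fromBlocks 0 0 0 R₃)) *
      (Matrix.fromBlocks (1 : Matrix (Fin (n-1)) (Fin (n-1)) 𝕜) 0 0
        (Matrix.fromBlocks A 0 0 0)) = 0 := by
  simp [Matrix.fromBlocks_multiply, ← Matrix.fromBlocks_zero]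

/-- Existence of a rank-`n` projection supported in the `H₃`-corner. -/
lemma aux_exists {𝕜 : Type*} [RCLike 𝕜] (n m : ℕ) (hm : n ≤ m) :
    ∃ R : Matrix (Fin (n - 1) ⊕ (Fin 2 ⊕ Fin m)) (Fin (n - 1) ⊕ (Fin 2 ⊕ Fin m)) 𝕜,
      R.IsHermitian ∧ R * R = R ∧ R.rank = n ∧
      ∃ R₃ : Matrix (Fin m) (Fin m) 𝕜, R = Matrix.fromBlocks 0 0 0 (Matrix.fromBlocks 0 0 0 R₃) := by
  set w : Fin m → 𝕜 := fun j => if (j : ℕ) < n then 1 else 0 with hw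
  set v : Fin (n - 1) ⊕ (Fin 2 ⊕ Fin m) → 𝕜 := Sum.elim 0 (Sum.elim 0 w) with hv
  have h01 : ∀ i, v i = 0 ∨ v i = 1 := by
    rintro (i | i | j)
    · exact Or.inl rfl
    · exact Or.inl rfl
    · simp only [hv, hw, Sum.elim_inr]
      split <;> simp
  refine ⟨Matrix.diagonal v, ?_, ?_, ?_, Matrix.diagonal w, ?_⟩
  · refine Matrix.isHermitian_diagonal_iff.mpr fun i => ?_
    rcases h01 i with h | h <;> rw [h] <;> simp [_root_.IsSelfAdjoint]
  · rw [Matrix.diagonal_mul_diagonal]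
    exact congrArg _ (funext fun i => by
      rcases h01 i with h | h <;> rw [h] <;> ring)
  · rw [Matrix.rank_diagonal]
    have e1 : {i // v i ≠ 0} ≃ {j : Fin m // (j : ℕ) < n} :=
      { toFun := fun x => match x with
          | ⟨Sum.inl i, h⟩ => absurd rfl h
          | ⟨Sum.inr (Sum.inl i), h⟩ => absurd rfl h
          | ⟨Sum.inr (Sum.inr j), h⟩ => ⟨j, by
              by_contra hc
              exact h (by simp [hv, hw, hc])⟩
        invFun := fun x => ⟨Sum.inr (Sum.inr x.1), by simp [hv, hw, x.2]⟩
        left_inv := by rintro ⟨(i | i | j), h⟩ <;> first | exact absurd rfl h | rfl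
        right_inv := by rintro ⟨j, h⟩; rfl }
    have e2 : {j : Fin m // (j : ℕ) < n} ≃ Fin n :=
      { toFun := fun x => ⟨x.1, x.2⟩
        invFun := fun k => ⟨⟨k.1, lt_of_lt_of_le k.2 hm⟩, k.2⟩
        left_inv := by rintro ⟨j, h⟩; rfl
        right_inv := by rintro ⟨k, h⟩; rfl }
    rw [Fintype.card_congr (e1.trans e2), Fintype.card_fin]
  · ext i j
    rcases i with i | i | i <;> rcases j with j | j | j <;>
      simp [Matrix.diagonal_apply, hv]

end Aux

/-- Let `P = diag(I_{n−1}, [[1,0],[0,0]], 0)` and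
`Q = diag(I_{n−1}, [[d,√(d(1−d))],[√(d(1−d)),1−d]], 0)` with `0 ≤ d < 1`, relative to
`H = H₁ ⊕ H₂ ⊕ H₃` with `dim H₁ = n − 1`, `dim H₂ = 2`, `dim H₃ = m ≥ n` (so `dim H ≥ 2n+1`).
Then `{P,Q}^⊤` (the set of rank-`n` projections `R` with `R P = 0` and `R Q = 0`) is exactly
the set of rank-`n` projections with range inside `H₃`, and it is nonempty. -/
theorem stmt14 {𝕜 : Type*} [RCLike 𝕜] (n m : ℕ) (hn : 2 ≤ n) (hm : n ≤ m)
    (d : ℝ) (hd₀ : 0 ≤ d) (hd₁ : d < 1)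
    (P Q : Matrix (Fin (n - 1) ⊕ (Fin 2 ⊕ Fin m)) (Fin (n - 1) ⊕ (Fin 2 ⊕ Fin m)) 𝕜)
    (hP : P = Matrix.fromBlocks 1 0 0 (Matrix.fromBlocks !![(1 : 𝕜), 0; 0, 0] 0 0 0))
    (hQ : Q = Matrix.fromBlocks 1 0 0
      (Matrix.fromBlocks
        !![((d : ℝ) : 𝕜), ((Real.sqrt (d * (1 - d)) : ℝ) : 𝕜);
           ((Real.sqrt (d * (1 - d)) : ℝ) : 𝕜), ((1 - d : ℝ) : 𝕜)] 0 0 0)) :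
    {R | IsProjMatOfRank n R ∧ R * P = 0 ∧ R * Q = 0} =
        {R | IsProjMatOfRank n R ∧
          ∃ R₃ : Matrix (Fin m) (Fin m) 𝕜,
            R = Matrix.fromBlocks 0 0 0 (Matrix.fromBlocks 0 0 0 R₃)} ∧
      {R | IsProjMatOfRank n R ∧ R * P = 0 ∧ R * Q = 0}.Nonempty := by
  have hset : {R | IsProjMatOfRank n R ∧ R * P = 0 ∧ R * Q = 0} =
      {R | IsProjMatOfRank n R ∧
        ∃ R₃ : Matrix (Fin m) (Fin m) 𝕜,
          R = Matrix.fromBlocks 0 0 0 (Matrix.fromBlocks 0 0 0 R₃)} := by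
    ext R
    simp only [Set.mem_setOf_eq]
    constructor
    · rintro ⟨hproj, hRP, hRQ⟩
      refine ⟨hproj, fun i j => R (Sum.inr (Sum.inr i)) (Sum.inr (Sum.inr j)), ?_⟩
      -- column facts
      have h1 : ∀ a j, R a (Sum.inl j) = 0 := by
        intro a j
        have := congrFun (congrFun hRP a) (Sum.inl j)
        simpa [hP, Matrix.mul_apply, Fintype.sum_sum_type, Matrix.one_apply] using this
      have h2 : ∀ a, R a (Sum.inr (Sum.inl 0)) = 0 := by
        intro a
        have := congrFun (congrFun hRP a) (Sum.inr (Sum.inl 0))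
        simpa [hP, Matrix.mul_apply, Fintype.sum_sum_type, Fin.sum_univ_two] using this
      have h3 : ∀ a, R a (Sum.inr (Sum.inl 1)) = 0 := by
        intro a
        have h := congrFun (congrFun hRQ a) (Sum.inr (Sum.inl 1))
        simp [hQ, Matrix.mul_apply, Fintype.sum_sum_type, Fin.sum_univ_two, h2] at h
        rcases h with h | h
        · exact h
        · refine absurd h ?_
          have : algebraMap ℝ 𝕜 (1 - d) ≠ 0 := by
            simp only [ne_eq, map_eq_zero]; intro hc; linarith
          simpa [map_sub] using this
      have hcol : ∀ a j, R a (Sum.inr (Sum.inl j)) = 0 := by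
        intro a j; fin_cases j
        · exact h2 a
        · exact h3 a
      -- row facts via hermitian symmetry
      have hH := hproj.1
      have h1' : ∀ j b, R (Sum.inl j) b = 0 := fun j b => by
        rw [← hH.apply, h1 b j, star_zero]
      have hcol' : ∀ j b, R (Sum.inr (Sum.inl j)) b = 0 := fun j b => by
        rw [← hH.apply, hcol b j, star_zero]
      ext a b
      rcases a with a | a | a <;> rcases b with b | b | b <;>
        simp [Matrix.fromBlocks, h1, h1', hcol, hcol']
    · rintro ⟨hproj, R₃, rfl⟩
      exact ⟨hproj, by rw [hP]; exact aux_annihilates R₃ _,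
        by rw [hQ]; exact aux_annihilates R₃ _⟩
  refine ⟨hset, ?_⟩
  rw [hset]
  obtain ⟨R, hH, hmul, hrank, R₃, hform⟩ := aux_exists (𝕜 := 𝕜) n m hm
  exact ⟨R, ⟨hH, hmul, hrank⟩, R₃, hform⟩
end

section
/- Let H be a Hilbert space with dim H = 2n. Two rank-n orthogonal projections P, Q on H are complementary (i.e., im P + im Q = H) if and only if ‖(I − P) − Q‖ < 1. -/
/-- On a `2n`-dimensional Hilbert space, rank-`n` projections `P, Q` are complementary
(`im P + im Q = H`) iff `‖(I − P) − Q‖ < 1`. -/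
theorem stmt15 {𝕜 H : Type*} [RCLike 𝕜] [NormedAddCommGroup H] [InnerProductSpace 𝕜 H]
    [CompleteSpace H] [FiniteDimensional 𝕜 H] (n : ℕ) (hn : 0 < n)
    (hdim : Module.finrank 𝕜 H = 2 * n)
    (P Q : H →L[𝕜] H) (hP : IsOrthProjOfRank n P) (hQ : IsOrthProjOfRank n Q) :
    LinearMap.range (P : H →ₗ[𝕜] H) ⊔ LinearMap.range (Q : H →ₗ[𝕜] H) = ⊤ ↔ ‖(1 - P) - Q‖ < 1 := by
  obtain ⟨hPsa, hP2, hPr⟩ := hP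
  obtain ⟨hQsa, hQ2, hQr⟩ := hQ
  have hP2' : P * P = P := hP2
  have hQ2' : Q * Q = Q := hQ2
  have hPs := hPsa.isSymmetric
  have hQs := hQsa.isSymmetric
  set T : H →L[𝕜] H := (1 - P) - Q with hTdef
  set D : H →L[𝕜] H := P - Q with hDdef
  have hTsa : IsSelfAdjoint T :=
    ((IsSelfAdjoint.one (R := H →L[𝕜] H)).sub hPsa).sub hQsa
  have hDsa : IsSelfAdjoint D := hPsa.sub hQsa
  have hTs := hTsa.isSymmetric
  have hDs := hDsa.isSymmetric
  have hop : T * T + D * D = 1 := by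
    rw [hTdef, hDdef]
    simp only [mul_sub, sub_mul, mul_one, one_mul, hP2', hQ2']
    abel
  -- key pointwise identity
  have key : ∀ x : H, ‖T x‖ ^ 2 + ‖D x‖ ^ 2 = ‖x‖ ^ 2 := by
    intro x
    have h1 : (inner 𝕜 (T x) (T x) : 𝕜) = inner 𝕜 x (T (T x)) := hTs x (T x)
    have h2 : (inner 𝕜 (D x) (D x) : 𝕜) = inner 𝕜 x (D (D x)) := hDs x (D x)
    have h3 : T (T x) + D (D x) = x := by
      have := congrArg (fun A : H →L[𝕜] H => A x) hop
      simpa [ContinuousLinearMap.add_apply, ContinuousLinearMap.mul_apply] using this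
    calc ‖T x‖ ^ 2 + ‖D x‖ ^ 2
        = RCLike.re (inner 𝕜 (T x) (T x) : 𝕜) + RCLike.re (inner 𝕜 (D x) (D x) : 𝕜) := by
          rw [inner_self_eq_norm_sq, inner_self_eq_norm_sq]
      _ = RCLike.re ((inner 𝕜 x (T (T x)) : 𝕜) + (inner 𝕜 x (D (D x)) : 𝕜)) := by
          rw [h1, h2, map_add]
      _ = RCLike.re (inner 𝕜 x x : 𝕜) := by rw [← inner_add_right, h3]
      _ = ‖x‖ ^ 2 := inner_self_eq_norm_sq x
  -- a vector orthogonal to range P is killed by P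
  have hkill : ∀ (R : H →L[𝕜] H), (R : H →ₗ[𝕜] H).IsSymmetric →
      ∀ x : H, (∀ u ∈ LinearMap.range (R : H →ₗ[𝕜] H), (inner 𝕜 u x : 𝕜) = 0) → R x = 0 := by
    intro R hRs x hx
    have h0 : (inner 𝕜 (R (R x)) x : 𝕜) = 0 := hx _ ⟨R x, rfl⟩
    have h1 : (inner 𝕜 (R x) (R x) : 𝕜) = inner 𝕜 x (R (R x)) := hRs x (R x)
    have h2 : (inner 𝕜 (R x) (R x) : 𝕜) = 0 := by
      rw [h1]; exact inner_eq_zero_symm.mp h0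
    exact inner_self_eq_zero.mp h2
  constructor
  · -- forward: complementary → norm < 1
    intro hsup
    have hntriv : Nontrivial H := by
      apply Module.nontrivial_of_finrank_pos (R := 𝕜) (M := H)
      rw [hdim]; omega
    -- intersection is trivial by dimension count
    have hinf : LinearMap.range (P : H →ₗ[𝕜] H) ⊓ LinearMap.range (Q : H →ₗ[𝕜] H) = ⊥ := by
      have hranks := Submodule.finrank_sup_add_finrank_inf_eq
        (LinearMap.range (P : H →ₗ[𝕜] H)) (LinearMap.range (Q : H →ₗ[𝕜] H))
      rw [hsup, finrank_top, hdim, hPr, hQr] at hranks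
      have : Module.finrank 𝕜 ↥(LinearMap.range (P : H →ₗ[𝕜] H) ⊓ LinearMap.range (Q : H →ₗ[𝕜] H)) = 0 := by omega
      exact Submodule.finrank_eq_zero.mp this
    -- D is injective
    have hker : ∀ x : H, D x = 0 → x = 0 := by
      intro x hx
      have hPQ : P x = Q x := by
        have : P x - Q x = 0 := by
          simpa [hDdef, ContinuousLinearMap.sub_apply] using hx
        exact sub_eq_zero.mp this
      have hy : P x ∈ LinearMap.range (P : H →ₗ[𝕜] H) ⊓ LinearMap.range (Q : H →ₗ[𝕜] H) := by
        refine ⟨⟨x, rfl⟩, ?_⟩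
        exact ⟨x, hPQ.symm⟩
      rw [hinf] at hy
      have hPx : P x = 0 := hy
      have hQx : Q x = 0 := by rw [← hPQ]; exact hPx
      -- x is orthogonal to range P ⊔ range Q = ⊤
      have hxo : x ∈ (LinearMap.range (P : H →ₗ[𝕜] H) ⊔ LinearMap.range (Q : H →ₗ[𝕜] H))ᗮ := by
        rw [Submodule.mem_orthogonal]
        intro u hu
        rcases Submodule.mem_sup.mp hu with ⟨a, ha, b, hb, rfl⟩
        rcases ha with ⟨a', rfl⟩
        rcases hb with ⟨b', rfl⟩
        have e1 : (inner 𝕜 (P a') x : 𝕜) = inner 𝕜 a' (P x) := hPs a' x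
        have e2 : (inner 𝕜 (Q b') x : 𝕜) = inner 𝕜 b' (Q x) := hQs b' x
        change inner 𝕜 (P a' + Q b') x = 0
        rw [inner_add_left, e1, e2, hPx, hQx, inner_zero_right,
          inner_zero_right, add_zero]
      rw [hsup, Submodule.top_orthogonal_eq_bot] at hxo
      exact hxo
    have hinj : Function.Injective D := by
      intro a b hab
      have : D (a - b) = 0 := by rw [map_sub, hab, sub_self]
      have := hker _ this
      exact sub_eq_zero.mp this
    have hex : ∃ C : ℝ, 0 ≤ C ∧ ∀ x : H, ‖x‖ ≤ C * ‖D x‖ := by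
      have hsurj : Function.Surjective D :=
        (LinearMap.injective_iff_surjective (f := (D : H →ₗ[𝕜] H))).mp hinj
      let e : H ≃ₗ[𝕜] H := LinearEquiv.ofBijective (D : H →ₗ[𝕜] H) ⟨hinj, hsurj⟩
      let e' : H ≃L[𝕜] H := e.toContinuousLinearEquiv
      refine ⟨‖(e'.symm : H →L[𝕜] H)‖, norm_nonneg _, fun x => ?_⟩
      have h1 : e'.symm (D x) = x := by
        have : e' x = D x := rfl
        rw [← this, ContinuousLinearEquiv.symm_apply_apply]
      calc ‖x‖ = ‖e'.symm (D x)‖ := by rw [h1]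
        _ ≤ ‖(e'.symm : H →L[𝕜] H)‖ * ‖D x‖ := (e'.symm : H →L[𝕜] H).le_opNorm (D x)
    obtain ⟨C, hCnn, hCx⟩ := hex
    have hDle : ∀ x : H, ‖D x‖ ≤ ‖x‖ := by
      intro x
      have h := key x
      nlinarith [norm_nonneg (T x), norm_nonneg (D x), norm_nonneg x]
    obtain ⟨z, hz⟩ := exists_ne (0 : H)
    have hz0 : 0 < ‖z‖ := norm_pos_iff.mpr hz
    have hC1 : 1 ≤ C := by
      have h1 := hCx z
      have h2 := hDle z
      nlinarith [mul_le_mul_of_nonneg_left h2 hCnn]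
    have hC0 : 0 < C := lt_of_lt_of_le one_pos hC1
    set k : ℝ := Real.sqrt (1 - (C⁻¹) ^ 2) with hkdef
    have hk0 : 0 ≤ k := Real.sqrt_nonneg _
    have hCi : 0 < (C⁻¹) ^ 2 := by positivity
    have hCi1 : (C⁻¹) ^ 2 ≤ 1 := by
      have : C⁻¹ ≤ 1 := by
        rw [inv_le_one_iff₀]; right; exact hC1
      nlinarith [inv_nonneg.mpr hC0.le]
    have hk1 : k < 1 := by
      rw [hkdef]
      have : Real.sqrt (1 - (C⁻¹) ^ 2) < Real.sqrt 1 :=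
        Real.sqrt_lt_sqrt (by linarith) (by linarith)
      rwa [Real.sqrt_one] at this
    have hksq : k ^ 2 = 1 - (C⁻¹) ^ 2 := Real.sq_sqrt (by linarith)
    have hbound : ∀ x : H, ‖T x‖ ≤ k * ‖x‖ := by
      intro x
      have h2 := key x
      have h3 : C⁻¹ * ‖x‖ ≤ ‖D x‖ := by
        rw [inv_mul_le_iff₀ hC0]
        exact hCx x
      have h4 : (C⁻¹ * ‖x‖) ^ 2 ≤ ‖D x‖ ^ 2 :=
        pow_le_pow_left₀ (by positivity) h3 2
      rw [mul_pow] at h4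
      have h5 : ‖T x‖ ^ 2 ≤ (k * ‖x‖) ^ 2 := by
        have he : (k * ‖x‖) ^ 2 = (1 - C⁻¹ ^ 2) * ‖x‖ ^ 2 := by
          rw [mul_pow, hksq]
        rw [he]
        ring_nf
        nlinarith [h2, h4]
      have h6 : 0 ≤ k * ‖x‖ := mul_nonneg hk0 (norm_nonneg x)
      exact (pow_le_pow_iff_left₀ (norm_nonneg (T x)) h6 two_ne_zero).mp h5
    have hTk : ‖T‖ ≤ k := ContinuousLinearMap.opNorm_le_bound T hk0 hbound
    exact lt_of_le_of_lt hTk hk1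
  · -- reverse: norm < 1 → complementary
    intro hnorm
    by_contra hsup
    have hbot : (LinearMap.range (P : H →ₗ[𝕜] H) ⊔ LinearMap.range (Q : H →ₗ[𝕜] H))ᗮ ≠ ⊥ := by
      intro h
      exact hsup (Submodule.orthogonal_eq_bot_iff.mp h)
    obtain ⟨x, hx, hx0⟩ := Submodule.exists_mem_ne_zero_of_ne_bot hbot
    rw [Submodule.mem_orthogonal] at hx
    have hPx : P x = 0 := by
      apply hkill P hPs
      intro u hu
      exact hx u (Submodule.mem_sup_left hu)
    have hQx : Q x = 0 := by
      apply hkill Q hQs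
      intro u hu
      exact hx u (Submodule.mem_sup_right hu)
    have hTx : T x = x := by
      simp [hTdef, ContinuousLinearMap.sub_apply, hPx, hQx]
    have h1 : ‖x‖ ≤ ‖T‖ * ‖x‖ := by
      calc ‖x‖ = ‖T x‖ := by rw [hTx]
        _ ≤ ‖T‖ * ‖x‖ := T.le_opNorm x
    have hx0' : 0 < ‖x‖ := norm_pos_iff.mpr hx0
    nlinarith
end
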